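/- Let A = (Σ, Q, δ) be a weakly acyclic automaton and let S, T ⊆ Q be nonempty subsets. Let a, b be two new letters not in Σ and s_f a new state not in Q, and define A' = (Σ ∪ {a,b}, Q ∪ {s_f}, δ') by: δ'(q, x) = δ(q, x) for q ∈ Q and x ∈ Σ; δ'(q, a) = s_f if q ∉ S and δ'(q, a) = q if q ∈ S; δ'(q, b) = s_f if q ∈ T and δ'(q, b) = q if q ∉ T; and δ'(s_f, x) = s_f for all letters x ∈ Σ ∪ {a,b}. Then A' is weakly acyclic, and there exists a word w ∈ Σ* with δ(S, w) ⊆ T if and only if there exists a word w ∈ Σ* with δ'(Q ∪ {s_f}, a w b) = {s_f}. -/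

import Mathlib

/-- The transition function extended to words: `δ*(q, u)`. -/
def deltaStar {Q A : Type*} (δ : Q → A → Q) (q : Q) (u : List A) : Q :=
  u.foldl δ q

/-- A complete deterministic semi-automaton is weakly acyclic if all simple
cycles are self-loops. -/
def WeaklyAcyclic {Q A : Type*} (δ : Q → A → Q) : Prop :=
  ∀ (q : Q) (u : List A), u ≠ [] → deltaStar δ q u = q → ∀ x ∈ u, δ q x = q

/-- The extended automaton `A'` over the alphabet `A ⊕ Bool` (with the fresh
letter `a` encoded as `Sum.inr false` and `b` as `Sum.inr true`) and state set
`Option Q` (with the fresh sink state `s_f` encoded as `none`):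
letters of `A` act as in `δ`; the letter `a` fixes states of `S` and sends all
other states to `s_f`; the letter `b` sends states of `T` to `s_f` and fixes
all other states; `s_f` is a sink state. -/
def extDelta {Q A : Type*} (δ : Q → A → Q) (S T : Set Q)
    [DecidablePred (· ∈ S)] [DecidablePred (· ∈ T)] :
    Option Q → A ⊕ Bool → Option Q
  | none, _ => none
  | some q, Sum.inl x => some (δ q x)
  | some q, Sum.inr false => if q ∈ S then some q else none
  | some q, Sum.inr true => if q ∈ T then none else some q

section Aux

variable {Q A : Type*} (δ : Q → A → Q) (S T : Set Q)
  [DecidablePred (· ∈ S)] [DecidablePred (· ∈ T)]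

lemma deltaStar_cons (q : Q) (x : A) (u : List A) :
    deltaStar δ q (x :: u) = deltaStar δ (δ q x) u := rfl

lemma deltaStar_append (q : Q) (u v : List A) :
    deltaStar δ q (u ++ v) = deltaStar δ (deltaStar δ q u) v :=
  List.foldl_append ..

lemma ext_none (u : List (A ⊕ Bool)) :
    deltaStar (extDelta δ S T) none u = none := by
  induction u with
  | nil => rfl
  | cons x u ih => exact ih

lemma ext_map (w : List A) (q : Q) :
    deltaStar (extDelta δ S T) (some q) (w.map Sum.inl)
      = some (deltaStar δ q w) := by
  induction w generalizing q with
  | nil => rfl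
  | cons x w ih => exact ih (δ q x)

lemma ext_proj (u : List (A ⊕ Bool)) (q q' : Q)
    (h : deltaStar (extDelta δ S T) (some q) u = some q') :
    deltaStar δ q (u.filterMap Sum.getLeft?) = q' := by
  induction u generalizing q with
  | nil => simpa [deltaStar] using h
  | cons x u ih =>
    cases x with
    | inl a =>
      have h' : deltaStar (extDelta δ S T) (some (δ q a)) u = some q' := h
      simpa [List.filterMap_cons, deltaStar_cons] using ih (δ q a) h'
    | inr b =>
      cases b with
      | false =>
        by_cases hq : q ∈ S
        · have h' : deltaStar (extDelta δ S T) (some q) u = some q' := by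
            have heq : extDelta δ S T (some q) (Sum.inr false) = some q := by
              simp [extDelta, hq]
            rw [deltaStar_cons, heq] at h; exact h
          simpa [List.filterMap_cons] using ih q h'
        · exfalso
          have heq : extDelta δ S T (some q) (Sum.inr false) = none := by
            simp [extDelta, hq]
          rw [deltaStar_cons, heq, ext_none] at h
          cases h
      | true =>
        by_cases hq : q ∈ T
        · exfalso
          have heq : extDelta δ S T (some q) (Sum.inr true) = none := by
            simp [extDelta, hq]
          rw [deltaStar_cons, heq, ext_none] at h
          cases h
        · have h' : deltaStar (extDelta δ S T) (some q) u = some q' := by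
            have heq : extDelta δ S T (some q) (Sum.inr true) = some q := by
              simp [extDelta, hq]
            rw [deltaStar_cons, heq] at h; exact h
          simpa [List.filterMap_cons] using ih q h'

lemma ext_fix (u : List (A ⊕ Bool)) (q : Q)
    (hfix : ∀ x ∈ u.filterMap Sum.getLeft?, δ q x = q)
    (h : deltaStar (extDelta δ S T) (some q) u = some q) :
    ∀ x ∈ u, extDelta δ S T (some q) x = some q := by
  induction u with
  | nil => intro x hx; exact absurd hx List.not_mem_nil
  | cons y u ih =>
    have hstep : extDelta δ S T (some q) y = some q := by
      cases y with
      | inl a =>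
        have ha : δ q a = q := hfix a (by simp [List.filterMap_cons])
        simp [extDelta, ha]
      | inr b =>
        cases b with
        | false =>
          by_cases hq : q ∈ S
          · simp [extDelta, hq]
          · exfalso
            have heq : extDelta δ S T (some q) (Sum.inr false) = none := by
              simp [extDelta, hq]
            rw [deltaStar_cons, heq, ext_none] at h
            cases h
        | true =>
          by_cases hq : q ∈ T
          · exfalso
            have heq : extDelta δ S T (some q) (Sum.inr true) = none := by
              simp [extDelta, hq]
            rw [deltaStar_cons, heq, ext_none] at h
            cases h
          · simp [extDelta, hq]
    have h' : deltaStar (extDelta δ S T) (some q) u = some q := by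
      rw [deltaStar_cons, hstep] at h; exact h
    have hfix' : ∀ x ∈ u.filterMap Sum.getLeft?, δ q x = q := by
      intro x hx
      apply hfix
      cases y with
      | inl a =>
        simp only [List.filterMap_cons, Sum.getLeft?, List.mem_cons]
        right; exact hx
      | inr b => simpa [List.filterMap_cons] using hx
    intro x hx
    rcases List.mem_cons.mp hx with rfl | hx
    · exact hstep
    · exact ih hfix' h' x hx

lemma f_some (w : List A) (q : Q) :
    deltaStar (extDelta δ S T) (some q)
        (Sum.inr false :: (w.map Sum.inl ++ [Sum.inr true])) =
      if q ∈ S then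
        (if deltaStar δ q w ∈ T then none else some (deltaStar δ q w))
      else none := by
  rw [deltaStar_cons]
  by_cases hq : q ∈ S
  · have h1 : extDelta δ S T (some q) (Sum.inr false) = some q := by
      simp [extDelta, hq]
    rw [h1, deltaStar_append, ext_map]
    simp only [hq, if_true]
    by_cases ht : deltaStar δ q w ∈ T <;>
      simp only [deltaStar] at ht ⊢ <;> simp [extDelta, ht]
  · have h1 : extDelta δ S T (some q) (Sum.inr false) = none := by
      simp [extDelta, hq]
    rw [h1, ext_none]
    simp [hq]

end Aux

/-- The set-transporter reduction: `A'` is weakly acyclic, and some word of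
`A*` maps `S` into `T` in `A` iff some word `w ∈ A*` satisfies
`δ'(Q ∪ {s_f}, a w b) = {s_f}` in `A'`. -/
theorem set_transporter_reduction {Q A : Type*} [Fintype Q] [Nonempty Q]
    [Fintype A] (δ : Q → A → Q) (hwa : WeaklyAcyclic δ)
    (S T : Set Q) [DecidablePred (· ∈ S)] [DecidablePred (· ∈ T)]
    (hS : S.Nonempty) (hT : T.Nonempty) :
    WeaklyAcyclic (extDelta δ S T) ∧
    ((∃ w : List A, (fun q => deltaStar δ q w) '' S ⊆ T) ↔
      ∃ w : List A,
        (fun p => deltaStar (extDelta δ S T) p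
            (Sum.inr false :: (w.map Sum.inl ++ [Sum.inr true]))) ''
          Set.univ = {none}) := by
  constructor
  · intro p u hne h x hx
    cases p with
    | none => rfl
    | some q =>
      have hproj := ext_proj δ S T u q q h
      have hfix : ∀ y ∈ u.filterMap Sum.getLeft?, δ q y = q := by
        by_cases he : u.filterMap Sum.getLeft? = []
        · intro y hy; rw [he] at hy; exact absurd hy List.not_mem_nil
        · exact hwa q _ he hproj
      exact ext_fix δ S T u q hfix h x hx
  · constructor
    · rintro ⟨w, hw⟩
      refine ⟨w, ?_⟩
      ext p
      simp only [Set.image_univ, Set.mem_range, Set.mem_singleton_iff]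
      constructor
      · rintro ⟨a, rfl⟩
        cases a with
        | none => exact ext_none δ S T _
        | some q =>
          rw [f_some]
          by_cases hq : q ∈ S
          · have hmem : deltaStar δ q w ∈ T := hw ⟨q, hq, rfl⟩
            simp [hq, hmem]
          · simp [hq]
      · rintro rfl
        exact ⟨none, ext_none δ S T _⟩
    · rintro ⟨w, hw⟩
      refine ⟨w, ?_⟩
      rintro t ⟨q, hq, rfl⟩
      have hnone : deltaStar (extDelta δ S T) (some q)
          (Sum.inr false :: (w.map Sum.inl ++ [Sum.inr true])) = none := by
        have hmem := hw.le (Set.mem_image_of_mem _ (Set.mem_univ (some q)))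
        simpa using hmem
      rw [f_some] at hnone
      simp only [hq, if_true] at hnone
      by_contra ht
      simp [ht] at hnone
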